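/- Let T be a weighted binary tree with n nodes and let N be the number of binary trees on n nodes (the n-th Catalan number). Then for every k ≥ N, β^{k+1}(T) = β^k(T); in particular there exists a finite k such that β^{k+1}(T) = β^k(T). -/

import Mathlib

/-- Binary trees storing a value (e.g. a weight) at every internal node. -/
inductive BTree (α : Type) where
  | leaf : BTree α
  | node : BTree α → α → BTree α → BTree α

namespace BTree

/-- The subtree of `t` rooted at the node addressed by the path `p`
(`false` = go left, `true` = go right); `none` if no such node. -/
def subtreeAt {α : Type} : BTree α → List Bool → Option (BTree α)
  | t, [] => some t
  | leaf, _ :: _ => none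
  | node l _ _, false :: p => subtreeAt l p
  | node _ _ r, true :: p => subtreeAt r p

/-- The value stored at the node of `t` addressed by `p`, if it exists. -/
def weightAt {α : Type} (t : BTree α) (p : List Bool) : Option α :=
  match subtreeAt t p with
  | some (node _ v _) => some v
  | _ => none

/-- The sum of all weights in the tree. -/
def totalWeight : BTree ℝ → ℝ
  | leaf => 0
  | node l v r => totalWeight l + v + totalWeight r

/-- `p̄(x)`: the aggregated weight of the subtree rooted at the node addressed
by `p`, with value `0` for an absent node. -/
def subWeight (t : BTree ℝ) (p : List Bool) : ℝ :=
  match subtreeAt t p with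
  | some s => totalWeight s
  | none => 0

/-- The weight of the node addressed by `p`, with default `0` for an absent node. -/
def weightD (t : BTree ℝ) (p : List Bool) : ℝ :=
  (weightAt t p).getD 0

/-- The depth of a node addressed by the path `p` (the root has depth 1). -/
def depth (p : List Bool) : ℕ := p.length + 1

/-- `c(T) = Σ_{x ∈ T} d(x) p(x)`, where the root has depth 1. -/
def cost : BTree ℝ → ℝ
  | leaf => 0
  | node l v r => (totalWeight l + v + totalWeight r) + cost l + cost r

/-- A tree is weighted if its weights are nonnegative and sum to 1. -/
def Weighted (t : BTree ℝ) : Prop :=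
  totalWeight t = 1 ∧ ∀ p w, weightAt t p = some w → (0 : ℝ) ≤ w

/-- Right rotation at the node addressed by `q`: replaces the subtree
`a(b(c,d),e)` rooted there by `b(c,a(d,e))`; `none` if the node addressed by
`q` does not exist or has no left child. -/
def rotateRightAt {α : Type} : BTree α → List Bool → Option (BTree α)
  | node (node c pb d) pa e, [] => some (node c pb (node d pa e))
  | node l v r, false :: p => (rotateRightAt l p).map (fun l' => node l' v r)
  | node l v r, true :: p => (rotateRightAt r p).map (fun r' => node l v r')
  | _, _ => none

/-- Left rotation at the node addressed by `q`: replaces the subtree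
`b(c,a(d,e))` rooted there by `a(b(c,d),e)`; `none` if the node addressed by
`q` does not exist or has no right child. -/
def rotateLeftAt {α : Type} : BTree α → List Bool → Option (BTree α)
  | node c pb (node d pa e), [] => some (node (node c pb d) pa e)
  | node l v r, false :: p => (rotateLeftAt l p).map (fun l' => node l' v r)
  | node l v r, true :: p => (rotateLeftAt r p).map (fun r' => node l v r')
  | _, _ => none

/-- `T^x`: bumping the (non-root) node `x` addressed by `p`, i.e. right
rotation at `π(x)` if `x` is a left child and left rotation at `π(x)` if `x`
is a right child.  Returns `none` iff `p` does not address a non-root node. -/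
def bump {α : Type} (t : BTree α) : List Bool → Option (BTree α)
  | [] => none
  | p => if p.getLastD false then rotateLeftAt t p.dropLast
         else rotateRightAt t p.dropLast

/-- The merit `μ(x,T) = p(x) + p̄(λ(x)) − p(π(x)) − p̄(σ(x))` of bumping the
node `x` addressed by `q ++ [dir]` whose parent `π(x)` is addressed by `q`;
`λ(x)` is the like-minded child of `x` and `σ(x)` the sibling of `x`. -/
def merit (t : BTree ℝ) (q : List Bool) (dir : Bool) : ℝ :=
  weightD t (q ++ [dir]) + subWeight t (q ++ [dir, dir])
    - weightD t q - subWeight t (q ++ [!dir])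

/-- The merit of bumping the node addressed by the (nonempty) path `p`. -/
def meritAt (t : BTree ℝ) (p : List Bool) : ℝ :=
  merit t p.dropLast (p.getLastD false)

open Classical in
/-- `β(T)`, the result of bumping `T`: `{T}` if no non-root node has positive
merit, and otherwise the set of all `T^x` for `x` a non-root node of maximal
merit. -/
noncomputable def beta (t : BTree ℝ) : Set (BTree ℝ) :=
  if ∃ p, p ≠ [] ∧ (weightAt t p).isSome ∧ 0 < meritAt t p then
    {t' | ∃ p, p ≠ [] ∧ (weightAt t p).isSome ∧
      (∀ q, q ≠ [] → (weightAt t q).isSome → meritAt t q ≤ meritAt t p) ∧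
      bump t p = some t'}
  else {t}

/-- `β^k(T)`: iterated bumping, `β^0(T) = {T}` and
`β^k(T) = ⋃_{t ∈ β^{k−1}(T)} β(t)`. -/
noncomputable def betaIter (t : BTree ℝ) : ℕ → Set (BTree ℝ)
  | 0 => {t}
  | k + 1 => ⋃ s ∈ betaIter t k, beta s

/-- The number of nodes of a binary tree. -/
def size {α : Type} : BTree α → ℕ
  | leaf => 0
  | node l _ r => size l + 1 + size r

/-- The in-order traversal of a binary tree. -/
def inorder {α : Type} : BTree α → List α
  | leaf => []
  | node l v r => inorder l ++ v :: inorder r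





lemma subtreeAt_cons {α : Type} (l r : BTree α) (v : α) (b : Bool) (s : List Bool) :
    subtreeAt (node l v r) (b :: s) = subtreeAt (cond b r l) s := by
  cases b <;> rfl

lemma weightD_cons (l r : BTree ℝ) (v : ℝ) (b : Bool) (s : List Bool) :
    weightD (node l v r) (b :: s) = weightD (cond b r l) s := by
  simp [weightD, weightAt, subtreeAt_cons]

lemma subWeight_cons (l r : BTree ℝ) (v : ℝ) (b : Bool) (s : List Bool) :
    subWeight (node l v r) (b :: s) = subWeight (cond b r l) s := by
  simp [subWeight, subtreeAt_cons]

lemma merit_cons (l r : BTree ℝ) (v : ℝ) (b : Bool) (q : List Bool) (dir : Bool) :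
    merit (node l v r) (b :: q) dir = merit (cond b r l) q dir := by
  simp [merit, List.cons_append, weightD_cons, subWeight_cons]

lemma totalWeight_eq_sum (t : BTree ℝ) : totalWeight t = (inorder t).sum := by
  induction t with
  | leaf => simp [totalWeight, inorder]
  | node l v r ihl ihr => simp [totalWeight, inorder, ihl, ihr]; ring

lemma rotateRightAt_spec : ∀ (q : List Bool) (t t' : BTree ℝ),
    rotateRightAt t q = some t' →
    inorder t' = inorder t ∧ cost t' = cost t - merit t q false
  | [], t, t', h => by
    match t, h with
    | node (node c pb d) pa e, h =>
      rw [rotateRightAt] at h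
      injection h with h; subst h
      constructor
      · simp [inorder]
      · simp [cost, merit, weightD, weightAt, subtreeAt, subWeight, totalWeight]
        ring
  | false :: p, t, t', h => by
    match t, h with
    | node l v r, h =>
      rw [rotateRightAt, Option.map_eq_some_iff] at h
      obtain ⟨l', hl', rfl⟩ := h
      obtain ⟨hi, hc⟩ := rotateRightAt_spec p l l' hl'
      have htw : totalWeight l' = totalWeight l := by
        rw [totalWeight_eq_sum, totalWeight_eq_sum, hi]
      refine ⟨by simp [inorder, hi], ?_⟩
      rw [merit_cons]
      simp only [cost, htw, hc, cond]
      ring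
  | true :: p, t, t', h => by
    match t, h with
    | node l v r, h =>
      rw [rotateRightAt, Option.map_eq_some_iff] at h
      obtain ⟨r', hr', rfl⟩ := h
      obtain ⟨hi, hc⟩ := rotateRightAt_spec p r r' hr'
      have htw : totalWeight r' = totalWeight r := by
        rw [totalWeight_eq_sum, totalWeight_eq_sum, hi]
      refine ⟨by simp [inorder, hi], ?_⟩
      rw [merit_cons]
      simp only [cost, htw, hc, cond]
      ring

lemma rotateLeftAt_spec : ∀ (q : List Bool) (t t' : BTree ℝ),
    rotateLeftAt t q = some t' →
    inorder t' = inorder t ∧ cost t' = cost t - merit t q true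
  | [], t, t', h => by
    match t, h with
    | node c pb (node d pa e), h =>
      rw [rotateLeftAt] at h
      injection h with h; subst h
      constructor
      · simp [inorder]
      · simp [cost, merit, weightD, weightAt, subtreeAt, subWeight, totalWeight]
        ring
  | false :: p, t, t', h => by
    match t, h with
    | node l v r, h =>
      rw [rotateLeftAt, Option.map_eq_some_iff] at h
      obtain ⟨l', hl', rfl⟩ := h
      obtain ⟨hi, hc⟩ := rotateLeftAt_spec p l l' hl'
      have htw : totalWeight l' = totalWeight l := by
        rw [totalWeight_eq_sum, totalWeight_eq_sum, hi]
      refine ⟨by simp [inorder, hi], ?_⟩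
      rw [merit_cons]
      simp only [cost, htw, hc, cond]
      ring
  | true :: p, t, t', h => by
    match t, h with
    | node l v r, h =>
      rw [rotateLeftAt, Option.map_eq_some_iff] at h
      obtain ⟨r', hr', rfl⟩ := h
      obtain ⟨hi, hc⟩ := rotateLeftAt_spec p r r' hr'
      have htw : totalWeight r' = totalWeight r := by
        rw [totalWeight_eq_sum, totalWeight_eq_sum, hi]
      refine ⟨by simp [inorder, hi], ?_⟩
      rw [merit_cons]
      simp only [cost, htw, hc, cond]
      ring

lemma bump_spec (t t' : BTree ℝ) (p : List Bool) (hp : p ≠ [])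
    (h : bump t p = some t') :
    inorder t' = inorder t ∧ cost t' = cost t - meritAt t p := by
  obtain ⟨a, l, rfl⟩ := List.exists_cons_of_ne_nil hp
  replace h : (if (a :: l).getLastD false then rotateLeftAt t ((a :: l).dropLast)
      else rotateRightAt t ((a :: l).dropLast)) = some t' := h
  by_cases hb : (a :: l).getLastD false
  · rw [if_pos hb] at h
    have := rotateLeftAt_spec _ _ _ h
    rwa [meritAt, hb]
  · rw [if_neg hb] at h
    have := rotateRightAt_spec _ _ _ h
    rw [meritAt]
    simp only [Bool.not_eq_true] at hb
    rwa [hb]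


noncomputable def shape {α : Type} : BTree α → Tree Unit
  | leaf => Tree.nil
  | node l _ r => Tree.node () (shape l) (shape r)

lemma shape_numNodes {α : Type} (t : BTree α) : (shape t).numNodes = size t := by
  induction t with
  | leaf => rfl
  | node l v r ihl ihr => simp [shape, size, Tree.numNodes, ihl, ihr]; omega

lemma inorder_length {α : Type} (t : BTree α) : (inorder t).length = size t := by
  induction t with
  | leaf => rfl
  | node l v r ihl ihr => simp [inorder, size, ihl, ihr]; omega

lemma shape_inj {α : Type} : ∀ t t' : BTree α, shape t = shape t' →
    inorder t = inorder t' → t = t'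
  | leaf, leaf, _, _ => rfl
  | leaf, node _ _ _, h, _ => by simp [shape] at h
  | node _ _ _, leaf, h, _ => by simp [shape] at h
  | node l v r, node l' v' r', h, hi => by
    simp only [shape, Tree.node, BinaryTree.node.injEq] at h
    have h1 : shape l = shape l' := h.2.1
    have h2 : shape r = shape r' := h.2.2
    have hlen : (inorder l).length = (inorder l').length := by
      have hn := congrArg Tree.numNodes h1
      rw [shape_numNodes, shape_numNodes] at hn
      rw [inorder_length, inorder_length, hn]
    simp only [inorder] at hi
    obtain ⟨hl, hvr⟩ := List.append_inj hi hlen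
    injection hvr with hv hr
    rw [shape_inj l l' h1 hl, shape_inj r r' h2 hr, hv]

/-- the positive-merit condition -/
def Cond (t : BTree ℝ) : Prop :=
  ∃ p, p ≠ [] ∧ (weightAt t p).isSome ∧ 0 < meritAt t p

lemma beta_of_not_cond {t : BTree ℝ} (h : ¬ Cond t) : beta t = {t} := by
  rw [beta]
  split_ifs with hc
  · exact absurd hc h
  · rfl

lemma mem_beta_of_cond {t t' : BTree ℝ} (h : Cond t) (ht' : t' ∈ beta t) :
    inorder t' = inorder t ∧ cost t' < cost t := by
  rw [beta] at ht'
  split_ifs at ht' with hc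
  swap
  · exact absurd h hc
  obtain ⟨p, hp, hw, hmax, hb⟩ := ht'
  obtain ⟨p₀, hp₀, hw₀, hm₀⟩ := h
  have hpos : 0 < meritAt t p := lt_of_lt_of_le hm₀ (hmax p₀ hp₀ hw₀)
  obtain ⟨hi, hc⟩ := bump_spec t t' p hp hb
  exact ⟨hi, by linarith⟩

lemma mem_beta_inorder {t t' : BTree ℝ} (ht' : t' ∈ beta t) :
    inorder t' = inorder t := by
  by_cases h : Cond t
  · exact (mem_beta_of_cond h ht').1
  · rw [beta_of_not_cond h] at ht'; rw [ht']

lemma betaIter_chain (T : BTree ℝ) : ∀ (k : ℕ) (t : BTree ℝ), t ∈ betaIter T k →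
    ∃ f : ℕ → BTree ℝ, f 0 = T ∧ f k = t ∧ ∀ i < k, f (i + 1) ∈ beta (f i)
  | 0, t, h => by
    rw [betaIter] at h
    exact ⟨fun _ => T, rfl, h.symm, by omega⟩
  | k + 1, t, h => by
    rw [betaIter] at h
    simp only [Set.mem_iUnion] at h
    obtain ⟨s, hs, hts⟩ := h
    obtain ⟨f, hf0, hfk, hstep⟩ := betaIter_chain T k s hs
    refine ⟨fun i => if i = k + 1 then t else f i, by simp [hf0], by simp, ?_⟩
    intro i hi
    rcases Nat.lt_succ_iff_lt_or_eq.mp hi with h' | h'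
    · have h1 : i + 1 ≠ k + 1 := by omega
      have h2 : i ≠ k + 1 := by omega
      have h1' : i ≠ k := by omega
      simpa [h1, h1', h2] using hstep i h'
    · subst h'
      have h2 : i ≠ i + 1 := by omega
      simpa [h2, hfk] using hts

end BTree

open BTree in
/-- Let `T` be a weighted binary tree with `n` nodes and let
`N = catalan n` be the number of binary trees on `n` nodes.  Then for every
`k ≥ N`, `β^{k+1}(T) = β^k(T)`; in particular there is a finite `k` with
`β^{k+1}(T) = β^k(T)`. -/
theorem betaIter_stabilizes (T : BTree ℝ) (hT : T.Weighted) :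
    (∀ k, catalan T.size ≤ k → betaIter T (k + 1) = betaIter T k) ∧
    ∃ k, betaIter T (k + 1) = betaIter T k := by
  have key : ∀ k, catalan T.size ≤ k → ∀ t ∈ betaIter T k, beta t = {t} := by
    intro k hk t ht
    obtain ⟨f, hf0, hfk, hstep⟩ := betaIter_chain T k t ht
    have hino : ∀ i ≤ k, inorder (f i) = inorder T := by
      intro i hi
      induction i with
      | zero => rw [hf0]
      | succ i ih =>
        rw [mem_beta_inorder (hstep i (by omega))]
        exact ih (by omega)
    by_cases hC : ∀ i < k, Cond (f i)
    · exfalso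
      have hmono : ∀ i j, i < j → j ≤ k → cost (f j) < cost (f i) := by
        intro i j hij
        induction j, hij using Nat.le_induction with
        | base =>
          intro hjk
          exact (mem_beta_of_cond (hC i (by omega)) (hstep i (by omega))).2
        | succ j hij ih =>
          intro hjk
          have hstepj : cost (f (j + 1)) < cost (f j) :=
            (mem_beta_of_cond (hC j (by omega)) (hstep j (by omega))).2
          exact hstepj.trans (ih (by omega))
      have hmem : ∀ i : Fin (k + 1), shape (f i) ∈ Tree.treesOfNumNodesEq T.size := by
        intro i
        rw [BinaryTree.mem_treesOfNumNodesEq]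
        refine (shape_numNodes (f i)).trans ?_
        rw [← inorder_length, ← inorder_length,
          hino i (by omega)]
      have hinjOn : Set.InjOn (fun i : Fin (k + 1) => shape (f i)) ↑(Finset.univ : Finset (Fin (k + 1))) := by
        intro i _ j _ hij
        by_contra hne
        have hne' : (i : ℕ) ≠ (j : ℕ) := fun h => hne (Fin.ext h)
        have heq : f i = f j := shape_inj _ _ hij
          (by rw [hino i (by omega), hino j (by omega)])
        rcases Nat.lt_or_ge (i : ℕ) (j : ℕ) with h' | h'
        · exact absurd (hmono i j h' (by omega)) (by rw [heq]; simp)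
        · have h'' : (j : ℕ) < (i : ℕ) := by omega
          exact absurd (hmono j i h'' (by omega)) (by rw [heq]; simp)
      have hcard := Finset.card_le_card_of_injOn _ (fun i _ => hmem i) hinjOn
      rw [Finset.card_univ, Fintype.card_fin, BinaryTree.treesOfNumNodesEq_card_eq_catalan] at hcard
      omega
    · push_neg at hC
      obtain ⟨i, hik, hNC⟩ := hC
      have hconst : ∀ j, i ≤ j → j ≤ k → f j = f i := by
        intro j hij
        induction j, hij using Nat.le_induction with
        | base => intro _; rfl
        | succ j hij ih =>
          intro hjk
          have hji : f j = f i := ih (by omega)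
          have hm := hstep j (by omega)
          rw [hji, beta_of_not_cond hNC] at hm
          exact hm
      have : t = f i := by rw [← hfk]; exact hconst k (by omega) le_rfl
      rw [this, beta_of_not_cond hNC]
  have main : ∀ k, catalan T.size ≤ k → betaIter T (k + 1) = betaIter T k := by
    intro k hk
    rw [betaIter]
    ext s
    simp only [Set.mem_iUnion]
    constructor
    · rintro ⟨u, hu, hsu⟩
      rw [key k hk u hu] at hsu
      rwa [hsu]
    · intro hs
      exact ⟨s, hs, by rw [key k hk s hs]; rfl⟩
  exact ⟨main, catalan T.size, main _ le_rfl⟩
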